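/- The automorphism group of the stable translation quiver Z[Ã_n] (with Ã_n a non-oriented cycle with n+1 vertices) is {τ^q ∘ α^r : q ∈ Z, 0 ≤ r ≤ n}, where, identifying the vertex set with Z × Z/(n+1), τ(s,[i]) = (s-1,[i]) and α(s,[i]) = (s,[i+1]). In particular the automorphism group is isomorphic to Z × Z/(n+1). -/

import Mathlib

set_option maxHeartbeats 1000000

/-- The arrow relation of the stable translation quiver `ℤ[Ã_n]`: vertices are
`(s, [i]) ∈ ℤ × ℤ/(n+1)`, with arrows `(s,[i]) → (s,[i+1])` and `(s,[i+1]) → (s+1,[i])`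
coming from the cyclically oriented cycle `Ã_n`. -/
def ZAtildeArrow (n : ℕ) (p q : ℤ × ZMod (n + 1)) : Prop :=
  (q.1 = p.1 ∧ q.2 = p.2 + 1) ∨ (q.1 = p.1 + 1 ∧ p.2 = q.2 + 1)

/-- The translation `τ(s,[i]) = (s-1,[i])` of `ℤ[Ã_n]`. -/
def ZAtildeTau (n : ℕ) : Equiv.Perm (ℤ × ZMod (n + 1)) :=
  ⟨fun p => (p.1 - 1, p.2), fun p => (p.1 + 1, p.2),
    fun p => by simp, fun p => by simp⟩

/-- The rotation `α(s,[i]) = (s,[i+1])` of `ℤ[Ã_n]`. -/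
def ZAtildeAlpha (n : ℕ) : Equiv.Perm (ℤ × ZMod (n + 1)) :=
  ⟨fun p => (p.1, p.2 + 1), fun p => (p.1, p.2 - 1),
    fun p => by simp, fun p => by simp⟩

lemma tau_pow_apply (n : ℕ) : ∀ (q : ℤ) (p : ℤ × ZMod (n + 1)),
    (ZAtildeTau n ^ q) p = (p.1 - q, p.2) := by
  intro q
  induction q using Int.induction_on with
  | zero => intro p; simp
  | succ k ih =>
    intro p
    rw [zpow_add_one, Equiv.Perm.mul_apply, ih]
    show ((p.1 - 1) - k, p.2) = _
    refine Prod.ext ?_ rfl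
    push_cast; ring
  | pred k ih =>
    intro p
    rw [zpow_sub_one, Equiv.Perm.mul_apply]
    have : ((ZAtildeTau n)⁻¹) p = (p.1 + 1, p.2) := rfl
    rw [this, ih]
    refine Prod.ext ?_ rfl
    push_cast; ring

lemma alpha_pow_apply (n : ℕ) : ∀ (r : ℕ) (p : ℤ × ZMod (n + 1)),
    (ZAtildeAlpha n ^ r) p = (p.1, p.2 + r) := by
  intro r
  induction r with
  | zero => intro p; simp
  | succ k ih =>
    intro p
    rw [pow_succ, Equiv.Perm.mul_apply, ih]
    show (p.1, p.2 + 1 + k) = _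
    refine Prod.ext rfl ?_
    push_cast; ring

lemma zmod_add_one_iff (m : ℕ) (a b x : ZMod m) : a + x = b + x + 1 ↔ a = b + 1 := by
  rw [add_right_comm, add_left_inj]

/-- the automorphisms of the stable translation quiver `ℤ[Ã_n]` (bijections
of the vertex set preserving the arrows and commuting with the translation `τ`) are
exactly the `τ^q ∘ α^r` with `q ∈ ℤ`, `0 ≤ r ≤ n`; in particular the automorphism group
is `⟨τ⟩ × ⟨α⟩ ≅ ℤ × ℤ/(n+1)` (note `τ^q α^r = τ^{q'} α^{r'}` with `q ∈ ℤ`, `0 ≤ r ≤ n`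
uniquely, `α^{n+1} = 1` and `τα = ατ`). -/
theorem automorphisms_of_ZAtilde (n : ℕ) (hn : 1 ≤ n) :
    (∀ f : Equiv.Perm (ℤ × ZMod (n + 1)),
      ((∀ p q, ZAtildeArrow n p q ↔ ZAtildeArrow n (f p) (f q)) ∧
        ∀ p, f (ZAtildeTau n p) = ZAtildeTau n (f p)) ↔
      ∃ (q : ℤ) (r : ℕ), r ≤ n ∧ f = ZAtildeTau n ^ q * ZAtildeAlpha n ^ r) ∧
    ZAtildeAlpha n ^ (n + 1) = 1 ∧
    ZAtildeTau n * ZAtildeAlpha n = ZAtildeAlpha n * ZAtildeTau n ∧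
    (∀ (q q' : ℤ) (r r' : ℕ), r ≤ n → r' ≤ n →
      ZAtildeTau n ^ q * ZAtildeAlpha n ^ r = ZAtildeTau n ^ q' * ZAtildeAlpha n ^ r' →
      q = q' ∧ r = r') := by
  refine ⟨?_, ?_, ?_, ?_⟩
  · intro f
    constructor
    · rintro ⟨harrow, htau⟩
      set c : ZMod (n + 1) → ℤ := fun i => (f (0, i)).1 with hcdef
      set d : ZMod (n + 1) → ZMod (n + 1) := fun i => (f (0, i)).2 with hddef
      have key : ∀ (s : ℤ) (i : ZMod (n + 1)), f (s, i) = (s + c i, d i) := by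
        intro s
        induction s using Int.induction_on with
        | zero => intro i; simp [hcdef, hddef]
        | succ k ih =>
          intro i
          have h := htau ((k : ℤ) + 1, i)
          have h1 : ZAtildeTau n ((k : ℤ) + 1, i) = ((k : ℤ), i) := by
            show ((k : ℤ) + 1 - 1, i) = _
            simp
          rw [h1, ih i] at h
          have h2 : ZAtildeTau n (f ((k : ℤ) + 1, i)) =
              ((f ((k : ℤ) + 1, i)).1 - 1, (f ((k : ℤ) + 1, i)).2) := rfl
          rw [h2, Prod.ext_iff] at h
          refine Prod.ext ?_ ?_
          · have := h.1; simp only at this ⊢; omega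
          · exact h.2.symm
        | pred k ih =>
          intro i
          have h := htau ((-(k : ℤ)), i)
          have h1 : ZAtildeTau n ((-(k : ℤ)), i) = ((-(k : ℤ) - 1), i) := rfl
          have h2 : ZAtildeTau n (f ((-(k : ℤ)), i)) =
              ((f ((-(k : ℤ)), i)).1 - 1, (f ((-(k : ℤ)), i)).2) := rfl
          rw [h1, h2, ih i] at h
          have h3 : (-(k : ℤ) - 1, i) = ((-(k : ℤ) + 1) - 1 - 1, i) := by
            refine Prod.ext ?_ rfl; push_cast; ring
          rw [h]
          refine Prod.ext ?_ rfl
          simp only; push_cast; ring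
      have step : ∀ i : ZMod (n + 1),
          (c (i + 1) = c i ∧ d (i + 1) = d i + 1) ∨
          (c (i + 1) = c i + 1 ∧ d i = d (i + 1) + 1) := by
        intro i
        have ha : ZAtildeArrow n (0, i) (0, i + 1) := Or.inl ⟨rfl, rfl⟩
        have h := (harrow _ _).mp ha
        rw [key 0 i, key 0 (i + 1)] at h
        rcases h with ⟨h1, h2⟩ | ⟨h1, h2⟩
        · left; constructor
          · simpa using h1
          · simpa using h2
        · right; constructor
          · simpa using h1
          · simpa using h2
      -- telescoping sum argument: c is constant
      have hCstep : ∀ k : ℕ, 0 ≤ c (((k + 1 : ℕ) : ZMod (n + 1))) - c ((k : ℕ) : ZMod (n + 1)) := by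
        intro k
        have h := step ((k : ℕ) : ZMod (n + 1))
        have hcast : (((k + 1 : ℕ) : ZMod (n + 1))) = ((k : ℕ) : ZMod (n + 1)) + 1 := by
          push_cast; ring
        rw [hcast]
        rcases h with ⟨h1, _⟩ | ⟨h1, _⟩ <;> omega
      have hsum : ∑ k ∈ Finset.range (n + 1),
          (c (((k + 1 : ℕ) : ZMod (n + 1))) - c ((k : ℕ) : ZMod (n + 1))) = 0 := by
        rw [Finset.sum_range_sub (f := fun k => c ((k : ℕ) : ZMod (n + 1)))]
        have : (((n + 1 : ℕ)) : ZMod (n + 1)) = ((0 : ℕ) : ZMod (n + 1)) := by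
          simp
        rw [this]
        ring
      have hzero : ∀ k ∈ Finset.range (n + 1),
          c (((k + 1 : ℕ) : ZMod (n + 1))) - c ((k : ℕ) : ZMod (n + 1)) = 0 := by
        rw [← Finset.sum_eq_zero_iff_of_nonneg (fun k _ => hCstep k)]
        exact hsum
      have hc : ∀ i : ZMod (n + 1), c (i + 1) = c i := by
        intro i
        have hv : i.val < n + 1 := ZMod.val_lt i
        have h := hzero i.val (Finset.mem_range.mpr hv)
        have hcast : ((i.val : ℕ) : ZMod (n + 1)) = i := by simp
        have hcast2 : (((i.val + 1 : ℕ)) : ZMod (n + 1)) = i + 1 := by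
          push_cast; rw [hcast]
        rw [hcast, hcast2] at h
        omega
      have hd : ∀ i : ZMod (n + 1), d (i + 1) = d i + 1 := by
        intro i
        rcases step i with ⟨_, h2⟩ | ⟨h1, _⟩
        · exact h2
        · exfalso; have := hc i; omega
      have hdk : ∀ k : ℕ, d ((k : ℕ) : ZMod (n + 1)) = d 0 + (k : ZMod (n + 1)) := by
        intro k
        induction k with
        | zero => simp
        | succ m ih =>
          have hcast : (((m + 1 : ℕ)) : ZMod (n + 1)) = ((m : ℕ) : ZMod (n + 1)) + 1 := by
            push_cast; ring
          rw [hcast, hd, ih]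
          push_cast; ring
      have hdi : ∀ i : ZMod (n + 1), d i = d 0 + i := by
        intro i
        have hcast : ((i.val : ℕ) : ZMod (n + 1)) = i := by simp
        have := hdk i.val
        rwa [hcast] at this
      refine ⟨-(c 0), (d 0).val, Nat.lt_succ_iff.mp (ZMod.val_lt (d 0)), ?_⟩
      refine Equiv.ext fun p => ?_
      rw [Equiv.Perm.mul_apply, alpha_pow_apply, tau_pow_apply]
      have hp : f p = (p.1 + c p.2, d p.2) := key p.1 p.2
      rw [hp, hdi p.2]
      have hcc : ∀ i : ZMod (n + 1), c i = c 0 := by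
        intro i
        have hcast : ((i.val : ℕ) : ZMod (n + 1)) = i := by simp
        have hk : ∀ k : ℕ, c ((k : ℕ) : ZMod (n + 1)) = c 0 := by
          intro k
          induction k with
          | zero => simp
          | succ m ih =>
            have hcast2 : (((m + 1 : ℕ)) : ZMod (n + 1)) = ((m : ℕ) : ZMod (n + 1)) + 1 := by
              push_cast; ring
            rw [hcast2, hc, ih]
        rw [← hcast, hk]
      rw [hcc p.2]
      refine Prod.ext ?_ ?_
      · simp only; ring
      · simp only
        rw [ZMod.natCast_val, ZMod.cast_id]
        ring
    · rintro ⟨q, r, hr, rfl⟩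
      constructor
      · intro p p'
        simp only [Equiv.Perm.mul_apply, tau_pow_apply, alpha_pow_apply]
        unfold ZAtildeArrow
        simp only
        constructor
        · rintro (⟨h1, h2⟩ | ⟨h1, h2⟩)
          · exact Or.inl ⟨by omega, by rw [zmod_add_one_iff]; exact h2⟩
          · exact Or.inr ⟨by omega, by rw [zmod_add_one_iff]; exact h2⟩
        · rintro (⟨h1, h2⟩ | ⟨h1, h2⟩)
          · exact Or.inl ⟨by omega, by rwa [zmod_add_one_iff] at h2⟩
          · exact Or.inr ⟨by omega, by rwa [zmod_add_one_iff] at h2⟩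
      · intro p
        simp only [Equiv.Perm.mul_apply, tau_pow_apply, alpha_pow_apply]
        have h1 : ZAtildeTau n p = (p.1 - 1, p.2) := rfl
        have h2 : ∀ x : ℤ × ZMod (n + 1), ZAtildeTau n x = (x.1 - 1, x.2) := fun _ => rfl
        rw [h1, h2]
        refine Prod.ext ?_ rfl
        simp only; ring
  · refine Equiv.ext fun p => ?_
    rw [alpha_pow_apply]
    have : (((n + 1 : ℕ)) : ZMod (n + 1)) = 0 := by simp
    rw [this]
    show (p.1, p.2 + 0) = p
    simp
  · exact Equiv.ext fun p => rfl
  · intro q q' r r' hr hr' h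
    have h0 := congrArg (fun g : Equiv.Perm (ℤ × ZMod (n + 1)) => g (0, 0)) h
    simp only [Equiv.Perm.mul_apply, tau_pow_apply, alpha_pow_apply] at h0
    rw [Prod.ext_iff] at h0
    obtain ⟨h1, h2⟩ := h0
    simp only at h1 h2
    constructor
    · omega
    · have : (r : ZMod (n + 1)) = (r' : ZMod (n + 1)) := by simpa using h2
      have hv := congrArg ZMod.val this
      rwa [ZMod.val_cast_of_lt (by omega), ZMod.val_cast_of_lt (by omega)] at hv
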